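/- Let Ω ⊂ X be an open set in a metric space, let b ∈ (0,1) and c₁ ≥ 1. Then there exists c₂ = 2c₁²/(1−b) + c₁ such that the following holds. Let N ∈ ℕ and let x₀, x₁, …, x_{N−1} ∈ Ω and x_N ∈ closure(Ω) satisfy d(x_{k+1}, ∂Ω) ≤ b · d(x_k, ∂Ω) for every k = 0, …, N−1. If for every k = 0, …, N−1 there exists a c₁-John curve γ_k starting at x_k and ending at x_{k+1}, then the concatenation of the curves γ₀, …, γ_{N−1} is a c₂-John curve starting at x₀ and ending at x_N. -/

import Mathlib

open Metric Set MeasureTheory ENNReal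

noncomputable section

namespace Paper

variable {X : Type*}

/-- The subcollection of balls (center, radius pairs) whose ball meets `A`. -/
def restr [MetricSpace X] (C : Set (X × ℝ)) (A : Set X) : Set (X × ℝ) :=
  {B ∈ C | (Metric.ball B.1 B.2 ∩ A).Nonempty}

/-- Total gauge mass of a collection of balls. -/
def gaugeSum (ξ : X → ℝ → ℝ≥0∞) (C : Set (X × ℝ)) : ℝ≥0∞ :=
  ∑' B : C, ξ (B : X × ℝ).1 (B : X × ℝ).2

/-- Hausdorff content at scale `r` with respect to a gauge `ξ`. -/
def gaugeContent [MetricSpace X] (ξ : X → ℝ → ℝ≥0∞) (r : ℝ) (A : Set X) : ℝ≥0∞ :=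
  ⨅ (C : Set (X × ℝ)) (_ : C.Countable) (_ : ∀ B ∈ C, 0 < B.2 ∧ B.2 ≤ r)
    (_ : A ⊆ ⋃ B ∈ C, Metric.ball B.1 B.2), gaugeSum ξ C

/-- A doubling gauge function with constant `D`. -/
def DoublingGauge [MetricSpace X] (ξ : X → ℝ → ℝ≥0∞) (D : ℝ≥0∞) : Prop :=
  (∀ (x : X) (r : ℝ), 0 < r → 0 < ξ x r ∧ ξ x r < ⊤) ∧
  ∀ (x x' : X) (r r' : ℝ), 0 < r' → r' ≤ r → r ≤ 2 * r' →
    (Metric.ball x' r' ∩ Metric.ball x r).Nonempty →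
    ξ x' r' ≤ D * ξ x r ∧ ξ x r ≤ D * ξ x' r'

/-- `X` is metrically `N`-doubling: every ball of radius `r` contains at most `N`
pairwise `r/2`-separated points. -/
def MetricDoubling (X : Type*) [MetricSpace X] (N : ℕ) : Prop :=
  ∀ (x : X) (r : ℝ) (S : Finset X), (↑S ⊆ Metric.ball x r) →
    (∀ y ∈ S, ∀ z ∈ S, y ≠ z → r / 2 ≤ dist y z) → S.card ≤ N

/-- `μ` is a doubling measure with constant `D`. -/
def DoublingMeasure [MetricSpace X] [MeasurableSpace X] (μ : Measure X) (D : ℝ≥0∞) : Prop :=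
  ∀ (x : X) (r : ℝ), 0 < r →
    0 < μ (Metric.ball x r) ∧ μ (Metric.ball x r) < ⊤ ∧
    μ (Metric.ball x (2 * r)) ≤ D * μ (Metric.ball x r)

/-- The codimension-`q` gauge `h_q(B) = μ(B)/rad(B)^q`. -/
def hGauge [MetricSpace X] [MeasurableSpace X] (μ : Measure X) (q : ℝ) (x : X) (r : ℝ) : ℝ≥0∞ :=
  μ (Metric.ball x r) / ENNReal.ofReal (r ^ q)

/-- Total `h_q` mass of a collection of balls. -/
def hSum [MetricSpace X] [MeasurableSpace X] (μ : Measure X) (q : ℝ) (C : Set (X × ℝ)) : ℝ≥0∞ :=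
  ∑' B : C, hGauge μ q (B : X × ℝ).1 (B : X × ℝ).2

/-- `ξ` has codimension at least `Q` (with constant `K`). -/
def HasCodimAtLeast [MetricSpace X] [MeasurableSpace X] (ξ : X → ℝ → ℝ≥0∞)
    (μ : Measure X) (Q : ℝ) (K : ℝ≥0∞) : Prop :=
  ∀ (x : X) (r R : ℝ), 0 < r → r ≤ R →
    ξ x R / ξ x r ≤ K * (hGauge μ Q x R / hGauge μ Q x r)

/-- `X` is a geodesic space: any two points are joined by a curve of length `dist x y`. -/
def GeodesicSpace (X : Type*) [MetricSpace X] : Prop :=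
  ∀ x y : X, ∃ γ : ℝ → X, γ 0 = x ∧ γ 1 = y ∧ ContinuousOn γ (Set.Icc 0 1) ∧
    eVariationOn γ (Set.Icc 0 1) = ENNReal.ofReal (dist x y)

/-- A `c`-John curve on the parameter interval `[a, b]`: every tail subcurve from `γ t`
has length at most `c · d(γ t, ∂Ω)`. -/
def IsJohnCurve [MetricSpace X] (Ω : Set X) (c : ℝ) (γ : ℝ → X) (a b : ℝ) : Prop :=
  ContinuousOn γ (Set.Icc a b) ∧ eVariationOn γ (Set.Icc a b) < ⊤ ∧
  ∀ t ∈ Set.Icc a b, eVariationOn γ (Set.Icc t b) ≤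
    ENNReal.ofReal (c * Metric.infDist (γ t) (frontier Ω))

/-- The `c`-accessible boundary of `Ω` from `x₀`. -/
def accBoundary [MetricSpace X] (Ω : Set X) (x₀ : X) (c : ℝ) : Set X :=
  {w ∈ frontier Ω | ∃ γ : ℝ → X, γ 0 = x₀ ∧ γ 1 = w ∧ IsJohnCurve Ω c γ 0 1}

/-- `g = sup_{B ∈ ℬ} (1/rad B) · 1_{2B}`. -/
def ballSup [MetricSpace X] (ℬ : Set (X × ℝ)) : X → ℝ≥0∞ :=
  fun w => ⨆ (B : ℬ) (_ : w ∈ Metric.ball (B : X × ℝ).1 (2 * (B : X × ℝ).2)),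
    (ENNReal.ofReal (B : X × ℝ).2)⁻¹

/-- The restricted (uncentered) maximal function at scale `s`. -/
def restrMax [MetricSpace X] [MeasurableSpace X] (μ : Measure X) (g : X → ℝ≥0∞)
    (s : ℝ) (x : X) : ℝ≥0∞ :=
  ⨆ (z : X) (ρ : ℝ) (_ : 0 < ρ) (_ : ρ < s) (_ : x ∈ Metric.ball z ρ),
    (∫⁻ w in Metric.ball z ρ, g w ∂μ) / μ (Metric.ball z ρ)

/-- `g` is an upper gradient of `f`: the upper gradient inequality holds along all
unit-speed (1-Lipschitz) curves. -/
def IsUpperGradient [MetricSpace X] (f : X → ℝ) (g : X → ℝ≥0∞) : Prop :=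
  ∀ (L : ℝ) (γ : ℝ → X), 0 ≤ L → LipschitzOnWith 1 γ (Set.Icc 0 L) →
    ENNReal.ofReal |f (γ L) - f (γ 0)| ≤ ∫⁻ t in Set.Icc 0 L, g (γ t)

/-- The `p`-Poincaré inequality with constants `CP, lam`. -/
def PoincareIneq [MetricSpace X] [MeasurableSpace X] (μ : Measure X)
    (p CP lam : ℝ) : Prop :=
  ∀ (f : X → ℝ) (g : X → ℝ≥0∞), MeasureTheory.LocallyIntegrable f μ → Measurable g →
    IsUpperGradient f g →
    ∀ (x : X) (r : ℝ), 0 < r →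
      ⨍ y in Metric.ball x r, |f y - ⨍ w in Metric.ball x r, f w ∂μ| ∂μ ≤
        CP * r * (((∫⁻ w in Metric.ball x (lam * r), g w ^ p ∂μ) /
          μ (Metric.ball x (lam * r))).toReal) ^ (1 / p)

/-- The pointwise `p`-Poincaré inequality with constants `(CP, L, lam)`. -/
def PointwisePoincare [MetricSpace X] [MeasurableSpace X] (μ : Measure X)
    (p CP L lam : ℝ) : Prop :=
  ∀ (x y : X) (g : X → ℝ≥0∞), Measurable g →
    (⨅ (ℓ : ℝ) (γ : ℝ → X) (_ : 0 ≤ ℓ) (_ : ℓ ≤ L * dist x y)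
        (_ : LipschitzOnWith 1 γ (Set.Icc 0 ℓ)) (_ : γ 0 = x) (_ : γ ℓ = y)
        (_ : ∀ t ∈ Set.Icc 0 ℓ, γ t ∈ Metric.ball x (2 * lam * dist x y)),
        ∫⁻ t in Set.Icc 0 ℓ, g (γ t)) ≤
      ENNReal.ofReal (CP * dist x y) *
        (restrMax μ (fun w => g w ^ p) (lam * dist x y) x +
         restrMax μ (fun w => g w ^ p) (lam * dist x y) y) ^ (1 / p)

/-- The `s`-dimensional Hausdorff content (at scale `∞`). -/
def sContent {Y : Type*} [MetricSpace Y] (s : ℝ) (A : Set Y) : ℝ≥0∞ :=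
  ⨅ (t : ℕ → Set Y) (_ : A ⊆ ⋃ n, t n), ∑' n, EMetric.diam (t n) ^ s

end Paper
theorem john_curve_concatenation {X : Type*} [MetricSpace X] (Ω : Set X) (hΩ : IsOpen Ω)
    (b c₁ : ℝ) (hb : b ∈ Set.Ioo (0:ℝ) 1) (hc₁ : 1 ≤ c₁)
    (N : ℕ) (hN : 1 ≤ N) (x : ℕ → X) (γ : ℕ → ℝ → X)
    (hxΩ : ∀ k < N, x k ∈ Ω) (hxN : x N ∈ closure Ω)
    (hgeom : ∀ k < N, Metric.infDist (x (k+1)) (frontier Ω) ≤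
      b * Metric.infDist (x k) (frontier Ω))
    (hJohn : ∀ k < N, Paper.IsJohnCurve Ω c₁ (γ k) 0 1 ∧ γ k 0 = x k ∧ γ k 1 = x (k+1)) :
    Paper.IsJohnCurve Ω (2 * c₁ ^ 2 / (1 - b) + c₁)
      (fun t : ℝ => if t < (N : ℝ) then γ ⌊t⌋₊ (t - (⌊t⌋₊ : ℝ)) else x N) 0 N ∧
    (fun t : ℝ => if t < (N : ℝ) then γ ⌊t⌋₊ (t - (⌊t⌋₊ : ℝ)) else x N) 0 = x 0 ∧
    (fun t : ℝ => if t < (N : ℝ) then γ ⌊t⌋₊ (t - (⌊t⌋₊ : ℝ)) else x N) N = x N := by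

  obtain ⟨hb0, hb1⟩ := hb
  have h1b : (0:ℝ) < 1 - b := by linarith
  have hc₁0 : (0:ℝ) ≤ c₁ := by linarith
  set Γ : ℝ → X := fun t : ℝ => if t < (N : ℝ) then γ ⌊t⌋₊ (t - (⌊t⌋₊ : ℝ)) else x N with hΓdef
  have hd0 : ∀ y : X, 0 ≤ Metric.infDist y (frontier Ω) := fun y => Metric.infDist_nonneg
  have hγ0 : ∀ k, k < N → γ k 0 = x k := fun k hk => (hJohn k hk).2.1
  have hγ1 : ∀ k, k < N → γ k 1 = x (k+1) := fun k hk => (hJohn k hk).2.2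
  have hA : ∀ k, k < N → ∀ t ∈ Set.Icc ((k:ℝ)) ((k:ℝ)+1), Γ t = γ k (t - (k:ℝ)) := by
    intro k hk t ht
    rcases lt_or_eq_of_le ht.2 with h | h
    · have htN : t < (N:ℝ) := lt_of_lt_of_le h (by exact_mod_cast Nat.succ_le_of_lt hk)
      have hfl : ⌊t⌋₊ = k := by
        rw [Nat.floor_eq_iff (le_trans (Nat.cast_nonneg k) ht.1)]
        exact ⟨ht.1, by exact_mod_cast h⟩
      simp only [hΓdef, if_pos htN, hfl]
    · have htk : t - (k:ℝ) = 1 := by rw [h]; ring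
      rcases lt_or_eq_of_le (Nat.succ_le_of_lt hk) with hk1 | hk1
      · have htN : t < (N:ℝ) := by rw [h]; exact_mod_cast hk1
        have ht' : t = ((k+1:ℕ):ℝ) := by push_cast; linarith [h]
        have hfl : ⌊t⌋₊ = k+1 := by rw [ht']; exact Nat.floor_natCast _
        simp only [hΓdef, if_pos htN, hfl]
        rw [htk, hγ1 k hk]
        push_cast
        rw [show t - ((k:ℝ)+1) = 0 by linarith [h], hγ0 (k+1) hk1]
      · have htN : t = (N:ℝ) := by rw [h]; exact_mod_cast congrArg (Nat.cast : ℕ → ℝ) hk1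
        have hnot : ¬ t < (N:ℝ) := by rw [htN]; exact lt_irrefl _
        simp only [hΓdef]
        rw [if_neg hnot, htk, hγ1 k hk]
        exact congrArg x hk1.symm
  have hvarpiece : ∀ k, k < N → ∀ s ∈ Set.Icc (0:ℝ) 1,
      eVariationOn Γ (Set.Icc ((k:ℝ)+s) ((k:ℝ)+1)) = eVariationOn (γ k) (Set.Icc s 1) := by
    intro k hk s hs
    have h1 : Set.EqOn Γ ((γ k) ∘ (fun u : ℝ => u - (k:ℝ))) (Set.Icc ((k:ℝ)+s) ((k:ℝ)+1)) := by
      intro t ht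
      exact hA k hk t ⟨le_trans (by linarith [hs.1]) ht.1, ht.2⟩
    have hmono : MonotoneOn (fun u : ℝ => u - (k:ℝ)) (Set.Icc ((k:ℝ)+s) ((k:ℝ)+1)) :=
      Monotone.monotoneOn (fun _ _ hab => sub_le_sub_right hab ((k:ℝ))) _
    rw [eVariationOn.eq_of_eqOn h1, eVariationOn.comp_eq_of_monotoneOn (γ k) _ hmono,
      Set.image_sub_const_Icc, show (k:ℝ)+s-(k:ℝ) = s by ring, show (k:ℝ)+1-(k:ℝ) = 1 by ring]
  have hTail : ∀ m k, k + m = N → eVariationOn Γ (Set.Icc ((k:ℝ)) ((N:ℝ))) ≤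
      ENNReal.ofReal (c₁/(1-b) * Metric.infDist (x k) (frontier Ω)) := by
    intro m
    induction m with
    | zero =>
      intro k hk
      have hkN : k = N := by omega
      subst hkN
      rw [Set.Icc_self, eVariationOn.subsingleton Γ Set.subsingleton_singleton]
      exact zero_le
    | succ m ih =>
      intro k hk
      have hkN : k < N := by omega
      have hk1N : (k:ℝ)+1 ≤ (N:ℝ) := by exact_mod_cast Nat.succ_le_of_lt hkN
      have hsplit := eVariationOn.Icc_add_Icc Γ (a := (k:ℝ)) (b := (k:ℝ)+1) (c := (N:ℝ))
        (by linarith) hk1N (Set.mem_univ _)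
      simp only [Set.univ_inter] at hsplit
      have hpiece := hvarpiece k hkN 0 ⟨le_rfl, zero_le_one⟩
      rw [add_zero] at hpiece
      have hpb : eVariationOn (γ k) (Set.Icc (0:ℝ) 1) ≤
          ENNReal.ofReal (c₁ * Metric.infDist (x k) (frontier Ω)) := by
        have h := (hJohn k hkN).1.2.2 0 ⟨le_rfl, zero_le_one⟩
        rwa [hγ0 k hkN] at h
      have hih := ih (k+1) (by omega)
      have hcast : ((k+1:ℕ):ℝ) = (k:ℝ)+1 := by push_cast; ring
      rw [hcast] at hih
      have hg := hgeom k hkN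
      have hnn1 : 0 ≤ c₁ * Metric.infDist (x k) (frontier Ω) := mul_nonneg hc₁0 (hd0 _)
      have hnn2 : 0 ≤ c₁/(1-b) * Metric.infDist (x (k+1)) (frontier Ω) :=
        mul_nonneg (div_nonneg hc₁0 h1b.le) (hd0 _)
      calc eVariationOn Γ (Set.Icc ((k:ℝ)) ((N:ℝ)))
          = eVariationOn Γ (Set.Icc ((k:ℝ)) ((k:ℝ)+1)) +
            eVariationOn Γ (Set.Icc ((k:ℝ)+1) ((N:ℝ))) := hsplit.symm
        _ ≤ ENNReal.ofReal (c₁ * Metric.infDist (x k) (frontier Ω)) +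
            ENNReal.ofReal (c₁/(1-b) * Metric.infDist (x (k+1)) (frontier Ω)) :=
              add_le_add (by rw [hpiece]; exact hpb) hih
        _ = ENNReal.ofReal (c₁ * Metric.infDist (x k) (frontier Ω) +
            c₁/(1-b) * Metric.infDist (x (k+1)) (frontier Ω)) := (ENNReal.ofReal_add hnn1 hnn2).symm
        _ ≤ ENNReal.ofReal (c₁/(1-b) * Metric.infDist (x k) (frontier Ω)) := by
            apply ENNReal.ofReal_le_ofReal
            have h2 : c₁/(1-b) * Metric.infDist (x (k+1)) (frontier Ω) ≤
                c₁/(1-b) * (b * Metric.infDist (x k) (frontier Ω)) :=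
              mul_le_mul_of_nonneg_left hg (div_nonneg hc₁0 h1b.le)
            have h3 : c₁ * Metric.infDist (x k) (frontier Ω) +
                c₁/(1-b) * (b * Metric.infDist (x k) (frontier Ω)) =
                c₁/(1-b) * Metric.infDist (x k) (frontier Ω) := by
              field_simp
              ring
            linarith
  have hMain : ∀ t ∈ Set.Icc (0:ℝ) (N:ℝ), eVariationOn Γ (Set.Icc t ((N:ℝ))) ≤
      ENNReal.ofReal ((2*c₁^2/(1-b)+c₁) * Metric.infDist (Γ t) (frontier Ω)) := by
    intro t ht
    by_cases htN : t < (N:ℝ)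
    · have hk : ⌊t⌋₊ < N := (Nat.floor_lt ht.1).2 htN
      have hkt : ((⌊t⌋₊:ℕ):ℝ) ≤ t := Nat.floor_le ht.1
      have htk1 : t < (⌊t⌋₊:ℝ)+1 := Nat.lt_floor_add_one t
      set k := ⌊t⌋₊ with hkdef
      set s := t - (k:ℝ) with hsdef
      have hs : s ∈ Set.Icc (0:ℝ) 1 := ⟨by simp only [hsdef]; linarith, by simp only [hsdef]; linarith⟩
      have hΓt : Γ t = γ k s := hA k hk t ⟨hkt, htk1.le⟩
      rw [hΓt]
      have hk1N : (k:ℝ)+1 ≤ (N:ℝ) := by exact_mod_cast Nat.succ_le_of_lt hk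
      have hsplit := eVariationOn.Icc_add_Icc Γ (a := t) (b := (k:ℝ)+1) (c := (N:ℝ))
        htk1.le hk1N (Set.mem_univ _)
      simp only [Set.univ_inter] at hsplit
      have hts : t = (k:ℝ) + s := by rw [hsdef]; ring
      have hpiece : eVariationOn Γ (Set.Icc t ((k:ℝ)+1)) = eVariationOn (γ k) (Set.Icc s 1) := by
        rw [hts]; exact hvarpiece k hk s hs
      have hd : 0 ≤ Metric.infDist (γ k s) (frontier Ω) := hd0 _
      have hJ : eVariationOn (γ k) (Set.Icc s 1) ≤
          ENNReal.ofReal (c₁ * Metric.infDist (γ k s) (frontier Ω)) := (hJohn k hk).1.2.2 s hs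
      have hdist : dist (x (k+1)) (γ k s) ≤ c₁ * Metric.infDist (γ k s) (frontier Ω) := by
        have h1 : edist (γ k s) (γ k 1) ≤ eVariationOn (γ k) (Set.Icc s 1) :=
          eVariationOn.edist_le (γ k) ⟨le_rfl, hs.2⟩ ⟨hs.2, le_rfl⟩
        have h2 := le_trans h1 hJ
        rw [edist_le_ofReal (mul_nonneg hc₁0 hd)] at h2
        rw [hγ1 k hk] at h2
        rw [dist_comm]
        exact h2
      have hdk1 : Metric.infDist (x (k+1)) (frontier Ω) ≤
          2*c₁*Metric.infDist (γ k s) (frontier Ω) := by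
        have h4 := Metric.infDist_le_infDist_add_dist (x := x (k+1)) (y := γ k s) (s := frontier Ω)
        nlinarith [mul_nonneg (sub_nonneg.2 hc₁) hd]
      have htail := hTail (N - (k+1)) (k+1) (by omega)
      have hcast : ((k+1:ℕ):ℝ) = (k:ℝ)+1 := by push_cast; ring
      rw [hcast] at htail
      have hnn1 : 0 ≤ c₁ * Metric.infDist (γ k s) (frontier Ω) := mul_nonneg hc₁0 hd
      have hnn2 : 0 ≤ c₁/(1-b) * (2*c₁*Metric.infDist (γ k s) (frontier Ω)) :=
        mul_nonneg (div_nonneg hc₁0 h1b.le) (mul_nonneg (mul_nonneg (by norm_num) hc₁0) hd)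
      calc eVariationOn Γ (Set.Icc t ((N:ℝ)))
          = eVariationOn Γ (Set.Icc t ((k:ℝ)+1)) +
            eVariationOn Γ (Set.Icc ((k:ℝ)+1) ((N:ℝ))) := hsplit.symm
        _ ≤ ENNReal.ofReal (c₁ * Metric.infDist (γ k s) (frontier Ω)) +
            ENNReal.ofReal (c₁/(1-b) * (2*c₁*Metric.infDist (γ k s) (frontier Ω))) := by
              refine add_le_add (by rw [hpiece]; exact hJ) (le_trans htail ?_)
              exact ENNReal.ofReal_le_ofReal
                (mul_le_mul_of_nonneg_left hdk1 (div_nonneg hc₁0 h1b.le))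
        _ = ENNReal.ofReal (c₁ * Metric.infDist (γ k s) (frontier Ω) +
            c₁/(1-b) * (2*c₁*Metric.infDist (γ k s) (frontier Ω))) :=
              (ENNReal.ofReal_add hnn1 hnn2).symm
        _ = ENNReal.ofReal ((2*c₁^2/(1-b)+c₁) * Metric.infDist (γ k s) (frontier Ω)) := by
              congr 1; ring
    · have htN' : t = (N:ℝ) := le_antisymm ht.2 (not_lt.1 htN)
      subst htN'
      rw [Set.Icc_self, eVariationOn.subsingleton Γ Set.subsingleton_singleton]
      exact zero_le
  have hcont : ContinuousOn Γ (Set.Icc (0:ℝ) (N:ℝ)) := by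
    have hpc : ∀ k : Fin N, ContinuousOn Γ (Set.Icc (((k:ℕ):ℝ)) (((k:ℕ):ℝ)+1)) := by
      intro k
      have hk : (k:ℕ) < N := k.2
      refine ContinuousOn.congr ?_ (fun t ht => hA k hk t ht)
      show ContinuousOn ((γ (k:ℕ)) ∘ (fun u : ℝ => u - ((k:ℕ):ℝ))) _
      refine ContinuousOn.comp (hJohn k hk).1.1
        ((continuous_id.sub continuous_const).continuousOn) ?_
      intro t ht
      exact ⟨by simp only [id_eq]; linarith [ht.1], by simp only [id_eq]; linarith [ht.2]⟩
    have hcu := (locallyFinite_of_finite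
        (fun k : Fin N => Set.Icc (((k:ℕ):ℝ)) (((k:ℕ):ℝ)+1))).continuousOn_iUnion
      (fun k => isClosed_Icc) hpc
    refine hcu.mono ?_
    intro t ht
    by_cases htN : t < (N:ℝ)
    · have hk : ⌊t⌋₊ < N := (Nat.floor_lt ht.1).2 htN
      exact Set.mem_iUnion.2 ⟨⟨⌊t⌋₊, hk⟩, Nat.floor_le ht.1, (Nat.lt_floor_add_one t).le⟩
    · have htN' : t = (N:ℝ) := le_antisymm ht.2 (not_lt.1 htN)
      refine Set.mem_iUnion.2 ⟨⟨N-1, by omega⟩, ?_, ?_⟩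
      · rw [htN']; exact_mod_cast Nat.sub_le N 1
      · rw [htN']
        have h5 : N ≤ (N-1) + 1 := by omega
        calc (N:ℝ) ≤ (((N-1)+1:ℕ):ℝ) := by exact_mod_cast h5
          _ = ((N-1:ℕ):ℝ) + 1 := by push_cast; ring
  have hΓ0 : Γ 0 = x 0 := by
    have h := hA 0 hN 0 (by norm_num)
    simpa [hγ0 0 hN] using h
  have hΓN : Γ (N:ℝ) = x N := by
    simp only [hΓdef, if_neg (lt_irrefl ((N:ℝ)))]
  refine ⟨⟨hcont, ?_, hMain⟩, hΓ0, hΓN⟩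
  exact lt_of_le_of_lt (hMain 0 ⟨le_rfl, Nat.cast_nonneg N⟩) ENNReal.ofReal_lt_top
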